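/- arXiv:2208.13989 — 2 statements merged into one kernel-verified Lean document; each statement's English description precedes it below -/
import Mathlib

section
/- Fix integers N ≥ 1 and 0 ≤ ℓ ≤ N−1 and a real β > 0, and let R_{Nℓ}(ρ) = e^{−ρ/2} ρ^ℓ · Σ_{t=0}^{N−ℓ−1} (−1)^t · binom(N+ℓ, N−ℓ−1−t) · ρ^t / t!. Then for every p ∈ ℝ, with θ = arctan(p/β), the imaginary part of ψ_{Nℓ}(p) = ∫₀^∞ e^{i p r} R_{Nℓ}(2β r) r dr equals the finite Gegenbauer (Chebyshev second-kind) expansion Im ψ_{Nℓ}(p) = Σ_{t=0}^{N−ℓ−1} b_t · sin θ · (cos θ)^{ℓ+t+2} · U_{ℓ+t+1}(cos θ), where U_n denotes the Chebyshev polynomial of the second kind (equal to the Gegenbauer polynomial C_n^1) and b_t = (−1)^t · binom(N+ℓ, N−ℓ−1−t) · (ℓ+t+1)! · 2^{ℓ+t+2} / ( t! · (2β)² ). -/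
open MeasureTheory Complex Real Nat Polynomial

section Helpers
open Set Filter


lemma aux_tendsto (b : ℂ) (hb : 0 < b.re) (m : ℕ) (c : ℂ) :
    Tendsto (fun x : ℝ => c * ((x:ℂ)^m * Complex.exp (-b*x))) atTop (nhds 0) := by
  rw [tendsto_zero_iff_norm_tendsto_zero]
  have h0 : Tendsto (fun x : ℝ => ‖c‖ * (x ^ (m:ℝ) * Real.exp (-b.re * x))) atTop (nhds 0) := by
    simpa using (tendsto_rpow_mul_exp_neg_mul_atTop_nhds_zero (m:ℝ) b.re hb).const_mul ‖c‖
  apply h0.congr'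
  filter_upwards [eventually_ge_atTop (0:ℝ)] with x hx
  rw [Real.rpow_natCast]
  simp [norm_mul, Complex.norm_exp, norm_pow, Complex.norm_real, Real.norm_eq_abs,
    _root_.abs_of_nonneg hx]

lemma aux_norm (b : ℂ) (m : ℕ) {x : ℝ} (hx : 0 ≤ x) :
    ‖(x:ℂ)^m * Complex.exp (-b*x)‖ = x ^ m * Real.exp (-b.re * x) := by
  simp [norm_mul, Complex.norm_exp, norm_pow, Complex.norm_real, Real.norm_eq_abs,
    _root_.abs_of_nonneg hx]

lemma aux_integrable (b : ℂ) (hb : 0 < b.re) (m : ℕ) :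
    IntegrableOn (fun x : ℝ => (x:ℂ)^m * Complex.exp (-b*x)) (Ioi 0) := by
  set f : ℝ → ℂ := fun x => (x:ℂ)^m * Complex.exp (-b*x) with hf
  have hc : ContinuousOn f (Ici (0:ℝ)) := by fun_prop
  have ho : f =O[atTop] fun x => Real.exp (-(b.re/2) * x) := by
    rw [Asymptotics.isBigO_iff]
    refine ⟨1, ?_⟩
    have ht : Tendsto (fun x : ℝ => x ^ (m:ℝ) * Real.exp (-(b.re/2) * x)) atTop (nhds 0) :=
      tendsto_rpow_mul_exp_neg_mul_atTop_nhds_zero (m:ℝ) _ (by linarith)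
    filter_upwards [ht.eventually (eventually_le_nhds one_pos), eventually_ge_atTop (0:ℝ)]
      with x h1 hx
    rw [hf]
    simp only [aux_norm b m hx]
    rw [Real.rpow_natCast] at h1
    have : x ^ m * Real.exp (-b.re * x) =
        (x ^ m * Real.exp (-(b.re/2) * x)) * Real.exp (-(b.re/2) * x) := by
      rw [mul_assoc, ← Real.exp_add]; ring_nf
    rw [this, Real.norm_eq_abs, Real.abs_exp, one_mul]
    exact mul_le_of_le_one_left (Real.exp_pos _).le h1 |>.trans_eq rfl
  exact Iff.mp integrableOn_Ici_iff_integrableOn_Ioi <|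
    (hc.locallyIntegrableOn measurableSet_Ici).integrableOn_of_isBigO_atTop ho
      ⟨Ioi 0, Ioi_mem_atTop 0, exp_neg_integrableOn_Ioi 0 (by linarith)⟩

lemma aux_deriv (b : ℂ) (m : ℕ) (x : ℝ) :
    HasDerivAt (fun x : ℝ => -b⁻¹ * ((x:ℂ)^m * Complex.exp (-b*x)))
      (-b⁻¹ * (((m:ℂ) * (x:ℂ)^(m-1)) * Complex.exp (-b*x)
        + (x:ℂ)^m * (-b * Complex.exp (-b*x)))) x := by
  have h1 : HasDerivAt (fun z : ℂ => z^m) ((m:ℂ) * (x:ℂ)^(m-1)) (x:ℂ) := hasDerivAt_pow m _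
  have h2 : HasDerivAt (fun z : ℂ => Complex.exp (-b*z)) (-b * Complex.exp (-b*(x:ℂ))) (x:ℂ) := by
    have := (Complex.hasDerivAt_exp (-b*(x:ℂ))).comp (x:ℂ)
      ((hasDerivAt_id (x:ℂ)).const_mul (-b))
    simpa [Function.comp_def, mul_comm] using this
  exact ((h1.mul h2).const_mul (-b⁻¹)).comp_ofReal

lemma key_integral (b : ℂ) (hb : 0 < b.re) (n : ℕ) :
    ∫ x in Ioi (0:ℝ), (x:ℂ)^n * Complex.exp (-b*x) = (n ! : ℂ) / b^(n+1) := by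
  have hb0 : b ≠ 0 := fun h => by simp [h] at hb
  induction n with
  | zero =>
    have h := integral_Ioi_of_hasDerivAt_of_tendsto' (a := 0) (m := 0)
      (fun x _ => aux_deriv b 0 x)
      (by
        apply (((aux_integrable b hb 0).const_mul (-b)).const_mul (-b⁻¹)).congr
        refine Filter.Eventually.of_forall fun x => by push_cast; ring)
      (by simpa using aux_tendsto b hb 0 (-b⁻¹))
    rw [show (fun x : ℝ => -b⁻¹ * (((0:ℕ):ℂ) * (x:ℂ)^(0-1) * Complex.exp (-b*x)
        + (x:ℂ)^0 * (-b * Complex.exp (-b*x)))) = fun x : ℝ => (x:ℂ)^0 * Complex.exp (-b*x)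
      from funext fun x => by push_cast; field_simp; ring] at h
    rw [h]
    simp [factorial]
  | succ n ih =>
    have h := integral_Ioi_of_hasDerivAt_of_tendsto' (a := 0) (m := 0)
      (fun x _ => aux_deriv b (n+1) x)
      (by
        have hsplit : ∀ x : ℝ, -b⁻¹ * ((((n:ℕ)+1:ℕ):ℂ) * (x:ℂ)^(n+1-1) * Complex.exp (-b*x)
            + (x:ℂ)^(n+1) * (-b * Complex.exp (-b*x)))
            = (x:ℂ)^(n+1) * Complex.exp (-b*x)
              - (((n:ℂ)+1) * b⁻¹) * ((x:ℂ)^n * Complex.exp (-b*x)) := by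
          intro x; push_cast; field_simp; ring
        apply ((aux_integrable b hb (n+1)).sub
          ((aux_integrable b hb n).const_mul (((n:ℂ)+1) * b⁻¹))).congr
        exact Filter.Eventually.of_forall fun x => (hsplit x).symm)
      (by simpa using aux_tendsto b hb (n+1) (-b⁻¹))
    have hsplit : (fun x : ℝ => -b⁻¹ * ((((n:ℕ)+1:ℕ):ℂ) * (x:ℂ)^(n+1-1) * Complex.exp (-b*x)
        + (x:ℂ)^(n+1) * (-b * Complex.exp (-b*x))))
        = fun x : ℝ => (x:ℂ)^(n+1) * Complex.exp (-b*x)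
          - (((n:ℂ)+1) * b⁻¹) * ((x:ℂ)^n * Complex.exp (-b*x)) := by
      funext x; push_cast; field_simp; ring
    rw [hsplit, integral_sub (aux_integrable b hb (n+1))
      ((aux_integrable b hb n).const_mul _), integral_const_mul, ih] at h
    have h2 : ∫ x in Ioi (0:ℝ), (x:ℂ)^(n+1) * Complex.exp (-b*x)
        = ((n:ℂ)+1) * b⁻¹ * ((n ! : ℂ) / b^(n+1)) := by
      have h0 : -b⁻¹ * (((0:ℝ):ℂ)^(n+1) * Complex.exp (-b*(0:ℝ))) = 0 := by
        simp
      rw [h0, sub_zero, sub_eq_zero] at h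
      exact h
    rw [h2, factorial_succ, pow_succ]
    push_cast
    rw [div_eq_mul_inv, div_eq_mul_inv, pow_succ, pow_succ, mul_inv, mul_inv]
    ring


lemma polar_b (β p θ : ℝ) (hβ : 0 < β) (hθ : θ = Real.arctan (p/β)) :
    ((β:ℂ) - Complex.I * p) = ((β / Real.cos θ : ℝ) : ℂ) * Complex.exp (((-θ : ℝ) : ℂ) * Complex.I) := by
  have hcos : 0 < Real.cos θ := by rw [hθ]; exact Real.cos_arctan_pos _
  have htan : Real.sin θ / Real.cos θ = p / β := by
    rw [← Real.tan_eq_sin_div_cos, hθ, Real.tan_arctan]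
  have hp : β * Real.sin θ / Real.cos θ = p := by
    rw [mul_div_assoc, htan]; field_simp
  rw [Complex.exp_mul_I]
  apply Complex.ext <;>
    simp [Complex.cos_ofReal_re, ← Complex.ofReal_cos, ← Complex.ofReal_sin,
      Real.cos_neg, Real.sin_neg]
  · field_simp
  · rw [div_mul_eq_mul_div]
    linarith [hp]

lemma inv_pow_b (β p θ : ℝ) (hβ : 0 < β) (hθ : θ = Real.arctan (p/β)) (m : ℕ) :
    (1:ℂ) / ((β:ℂ) - Complex.I * p)^m
      = (((Real.cos θ / β)^m : ℝ) : ℂ) * Complex.exp (((m * θ : ℝ) : ℂ) * Complex.I) := by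
  have hcos : 0 < Real.cos θ := by rw [hθ]; exact Real.cos_arctan_pos _
  have key : ((β:ℂ) - Complex.I * p)^m * ((((Real.cos θ / β)^m : ℝ) : ℂ)
      * Complex.exp (((m * θ : ℝ) : ℂ) * Complex.I)) = 1 := by
    have e1 : ((β / Real.cos θ : ℝ) : ℂ) * ((Real.cos θ / β : ℝ) : ℂ) = 1 := by
      rw [← Complex.ofReal_mul]
      norm_cast
      field_simp
    have e2 : (m:ℂ) * (((-θ : ℝ):ℂ) * Complex.I) + ((m * θ : ℝ):ℂ) * Complex.I = 0 := by
      push_cast; ring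
    rw [polar_b β p θ hβ hθ, mul_pow, ← Complex.exp_nat_mul, Complex.ofReal_pow]
    rw [show ((β / Real.cos θ : ℝ) : ℂ)^m * Complex.exp ((m:ℂ) * (((-θ:ℝ):ℂ) * Complex.I))
        * (((Real.cos θ / β : ℝ):ℂ)^m * Complex.exp (((m * θ : ℝ):ℂ) * Complex.I))
      = (((β / Real.cos θ : ℝ) : ℂ) * ((Real.cos θ / β : ℝ):ℂ))^m
        * Complex.exp ((m:ℂ) * (((-θ:ℝ):ℂ) * Complex.I) + ((m * θ : ℝ):ℂ) * Complex.I) from by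
          rw [Complex.exp_add, mul_pow]; ring]
    rw [e1, e2, one_pow, one_mul, Complex.exp_zero]
  rw [mul_comm] at key
  exact (eq_one_div_of_mul_eq_one_left key).symm

end Helpers

section Main
open Set Filter

/-- Gegenbauer (Chebyshev second-kind) expansion of the imaginary part of the
radial momentum-space hydrogen wave functions. With
`R_{Nℓ}(ρ) = e^{−ρ/2} ρ^ℓ Σ_t (−1)^t C(N+ℓ, N−ℓ−1−t) ρ^t/t!` and `θ = arctan(p/β)`,
`Im ψ_{Nℓ}(p) = Σ_t b_t sin θ cos^{ℓ+t+2} θ · U_{ℓ+t+1}(cos θ)`, where `U_n` is the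
Chebyshev polynomial of the second kind and
`b_t = (−1)^t C(N+ℓ, N−ℓ−1−t) (ℓ+t+1)! 2^{ℓ+t+2} / (t! (2β)²)`. -/
theorem hydrogen_radial_momentum_wavefunction_im_chebyshev
    (N ℓ : ℕ) (hN : 1 ≤ N) (hℓ : ℓ + 1 ≤ N) (β : ℝ) (hβ : 0 < β)
    (R : ℝ → ℝ)
    (hR : ∀ ρ : ℝ, R ρ = Real.exp (-ρ / 2) * ρ ^ ℓ *
      ∑ t ∈ Finset.range (N - ℓ),
        (-1 : ℝ) ^ t * ((N + ℓ).choose (N - ℓ - 1 - t) : ℝ) * ρ ^ t / (t ! : ℝ))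
    (p : ℝ) (θ : ℝ) (hθ : θ = Real.arctan (p / β)) :
    (∫ r in Set.Ioi (0 : ℝ),
        Complex.exp (Complex.I * p * r) * ((R (2 * β * r) : ℝ) : ℂ) * (r : ℂ)).im
      = ∑ t ∈ Finset.range (N - ℓ),
          ((-1 : ℝ) ^ t * ((N + ℓ).choose (N - ℓ - 1 - t) : ℝ) * ((ℓ + t + 1)! : ℝ)
              * 2 ^ (ℓ + t + 2) / ((t ! : ℝ) * (2 * β) ^ 2))
            * Real.sin θ * Real.cos θ ^ (ℓ + t + 2)
            * (Polynomial.Chebyshev.U ℝ ((ℓ : ℤ) + t + 1)).eval (Real.cos θ) := by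
  have hcos : 0 < Real.cos θ := by rw [hθ]; exact Real.cos_arctan_pos _
  set b : ℂ := (β:ℂ) - Complex.I * p with hb
  have hbre : 0 < b.re := by simp [hb, hβ]
  -- coefficients
  set c : ℕ → ℝ := fun t =>
    (-1:ℝ)^t * ((N+ℓ).choose (N-ℓ-1-t) : ℝ) * (2*β)^(ℓ+t) / t ! with hc
  -- Step A: rewrite the integrand
  have hintg : ∀ r : ℝ,
      Complex.exp (Complex.I * p * r) * ((R (2*β*r) : ℝ):ℂ) * (r:ℂ)
      = ∑ t ∈ Finset.range (N-ℓ),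
          ((c t : ℝ) : ℂ) * ((r:ℂ)^(ℓ+t+1) * Complex.exp (-b*r)) := by
    intro r
    have hexp : Complex.exp (Complex.I*p*r) * Complex.exp (-(2*(β:ℂ)*r)/2)
        = Complex.exp (-b*r) := by
      rw [← Complex.exp_add]; congr 1; rw [hb]; ring
    rw [hR]
    push_cast
    simp only [Finset.mul_sum, Finset.sum_mul]
    refine Finset.sum_congr rfl fun t ht => ?_
    rw [← hexp, hc]
    push_cast
    ring
  rw [MeasureTheory.integral_congr_ae (Filter.Eventually.of_forall fun r => hintg r)]
  rw [MeasureTheory.integral_finset_sum _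
    (fun t _ => (aux_integrable b hbre (ℓ+t+1)).const_mul _)]
  simp only [MeasureTheory.integral_const_mul, key_integral b hbre]
  rw [Complex.im_sum]
  refine Finset.sum_congr rfl fun t ht => ?_
  -- per-term computation
  have him : (((c t : ℝ):ℂ) * (((ℓ+t+1)! : ℂ) / b^(ℓ+t+1+1)))
      = ((c t * ((ℓ+t+1)! : ℝ) * (Real.cos θ / β)^(ℓ+t+2) : ℝ) : ℂ)
        * Complex.exp ((((ℓ+t+2 : ℕ) * θ : ℝ) : ℂ) * Complex.I) := by
    rw [div_eq_mul_one_div, hb, inv_pow_b β p θ hβ hθ (ℓ+t+2)]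
    push_cast
    ring
  rw [show (ℓ+t+1+1) = (ℓ+t+2) from rfl] at him
  rw [him]
  simp only [Complex.mul_im, Complex.ofReal_re, Complex.ofReal_im,
    Complex.exp_ofReal_mul_I_im, Complex.exp_ofReal_mul_I_re, zero_mul, add_zero]
  -- Chebyshev
  have hU : Real.sin (((ℓ+t+2 : ℕ) : ℝ) * θ)
      = (Polynomial.Chebyshev.U ℝ ((ℓ:ℤ)+t+1)).eval (Real.cos θ) * Real.sin θ := by
    rw [Polynomial.Chebyshev.U_real_cos]
    congr 1
    push_cast
    ring
  set UU := (Polynomial.Chebyshev.U ℝ ((ℓ:ℤ)+t+1)).eval (Real.cos θ) with hUU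
  rw [hU, hc]
  have hfac : (t ! : ℝ) ≠ 0 := by positivity
  have hβ0 : β ≠ 0 := hβ.ne'
  field_simp
  ring_nf
  field_simp
  have hk : ∀ k : ℕ, β ^ k * (1 / β) ^ k = 1 := fun k => by
    rw [← mul_pow, mul_one_div_cancel hβ0, one_pow]
  linear_combination (((N + ℓ).choose (N - ℓ - 1 - t) : ℝ) * UU * Real.sin θ * β ^ t * (1 / β) ^ t) * hk ℓ
    + (((N + ℓ).choose (N - ℓ - 1 - t) : ℝ) * UU * Real.sin θ) * hk t

end Main
end

section
/- Fix an integer N ≥ 1 and a real β > 0. For the maximal angular momentum ℓ = N−1 (so the radial function is R_{N,N−1}(ρ) = e^{−ρ/2} ρ^{N−1}), the momentum-space wave function ψ(p) = ∫₀^∞ e^{i p r} · (2β r)^{N−1} e^{−β r} · r dr satisfies, for every p ∈ ℝ, the momentum-distribution identity |ψ(p)|² = (N!)² · (2β)^{2(N−1)} / (β² + p²)^{N+1}. -/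
open MeasureTheory Complex Real Nat

open Filter in
lemma aux_tendsto_s14 (c : ℂ) (hc : 0 < c.re) (n : ℕ) :
    Filter.Tendsto (fun t : ℝ => (t : ℂ) ^ n * Complex.exp (-(c * t)))
      Filter.atTop (nhds 0) := by
  rw [tendsto_zero_iff_norm_tendsto_zero]
  have h := tendsto_rpow_mul_exp_neg_mul_atTop_nhds_zero (n : ℝ) c.re hc
  apply h.congr'
  filter_upwards [eventually_ge_atTop (0:ℝ)] with t ht
  rw [norm_mul, norm_pow, Complex.norm_exp,
    Complex.norm_real, Real.norm_of_nonneg ht, Real.rpow_natCast]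
  congr 1
  simp [mul_comm]

lemma aux_integrable_s14 (c : ℂ) (hc : 0 < c.re) (n : ℕ) :
    IntegrableOn (fun t : ℝ => (t : ℂ) ^ n * Complex.exp (-(c * t))) (Set.Ioi 0) := by
  have hg : IntegrableOn (fun x : ℝ => x ^ (n : ℝ) * Real.exp (-c.re * x ^ (1:ℝ)))
      (Set.Ioi 0) :=
    integrableOn_rpow_mul_exp_neg_mul_rpow
      ((neg_lt_zero.mpr one_pos).trans_le (Nat.cast_nonneg n)) one_pos hc
  refine Integrable.mono' hg ?_ ?_
  · exact (Continuous.aestronglyMeasurable (by continuity)).restrict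
  · filter_upwards [ae_restrict_mem measurableSet_Ioi] with t ht
    rw [norm_mul, norm_pow, Complex.norm_exp,
      Complex.norm_real, Real.norm_of_nonneg (le_of_lt ht), Real.rpow_one, Real.rpow_natCast]
    apply le_of_eq
    congr 1
    simp [mul_comm]

lemma aux_integral (c : ℂ) (hc : 0 < c.re) :
    ∀ n : ℕ, ∫ t in Set.Ioi (0:ℝ), (t : ℂ) ^ n * Complex.exp (-(c * t))
      = n ! / c ^ (n + 1) := by
  have hc0 : c ≠ 0 := fun h => by simp [h] at hc
  intro n
  induction n with
  | zero =>
    have hderiv : ∀ x ∈ Set.Ici (0:ℝ),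
        HasDerivAt (fun t : ℝ => -(1/c) * Complex.exp (-(c * t)))
          ((fun t : ℝ => ((t:ℂ)) ^ 0 * Complex.exp (-(c * t))) x) x := by
      intro x _
      have h1 : HasDerivAt (fun t : ℝ => -(c * t)) (-c) x := by
        simpa [Pi.neg_def] using ((hasDerivAt_id x).ofReal_comp.const_mul c).neg
      have := (h1.cexp).const_mul (-(1/c))
      convert this using 1
      · rfl
      field_simp
    have := integral_Ioi_of_hasDerivAt_of_tendsto' hderiv
      (aux_integrable_s14 c hc 0) (by simpa using (aux_tendsto_s14 c hc 0).const_mul (-(1/c)))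
    simp only [this]
    simp [hc0]
  | succ n ih =>
    have hderiv : ∀ x ∈ Set.Ici (0:ℝ),
        HasDerivAt (fun t : ℝ => -(1/c) * (t:ℂ) ^ (n+1) * Complex.exp (-(c * t)))
          ((x:ℂ) ^ (n+1) * Complex.exp (-(c * x))
            - ((n:ℂ)+1)/c * ((x:ℂ) ^ n * Complex.exp (-(c * x)))) x := by
      intro x _
      have hx : HasDerivAt (fun t : ℝ => (t:ℂ)) 1 x := by
        simpa using (hasDerivAt_id x).ofReal_comp
      have h1 : HasDerivAt (fun t : ℝ => -(1/c) * (t:ℂ) ^ (n+1))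
          (-(1/c) * (((n:ℂ)+1) * (x:ℂ) ^ n)) x := by
        have := ((hasDerivAt_pow (n+1) (x:ℂ)).comp_ofReal).const_mul (-(1/c))
        convert this using 1
        · rfl
        push_cast
        ring
      have h2 : HasDerivAt (fun t : ℝ => Complex.exp (-(c * t)))
          (-c * Complex.exp (-(c * x))) x := by
        have h3 : HasDerivAt (fun t : ℝ => -(c * t)) (-c) x := by
          simpa [Pi.neg_def] using ((hasDerivAt_id x).ofReal_comp.const_mul c).neg
        simpa [mul_comm] using h3.cexp
      have := h1.mul h2
      convert this using 1
      · rfl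
      · rfl
      field_simp
      ring
    have hint : IntegrableOn
        (fun x : ℝ => (x:ℂ) ^ (n+1) * Complex.exp (-(c * x))
          - ((n:ℂ)+1)/c * ((x:ℂ) ^ n * Complex.exp (-(c * x)))) (Set.Ioi 0) :=
      (aux_integrable_s14 c hc (n+1)).sub ((aux_integrable_s14 c hc n).const_mul _)
    have htend : Filter.Tendsto (fun t : ℝ => -(1/c) * (t:ℂ) ^ (n+1) * Complex.exp (-(c * t)))
        Filter.atTop (nhds 0) := by
      have := (aux_tendsto_s14 c hc (n+1)).const_mul (-(1/c))
      simpa [mul_assoc] using this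
    have key := integral_Ioi_of_hasDerivAt_of_tendsto' hderiv hint htend
    rw [integral_sub (aux_integrable_s14 c hc (n+1)) ((aux_integrable_s14 c hc n).const_mul _),
      integral_const_mul, ih] at key
    norm_num at key
    rw [sub_eq_zero] at key
    rw [key, Nat.factorial_succ]
    push_cast
    rw [_root_.div_mul_div_comm, pow_succ' c (n+1)]

/-- for maximal angular momentum `ℓ = N−1`, the momentum-space wave function
`ψ(p) = ∫₀^∞ e^{ipr} (2βr)^{N−1} e^{−βr} r dr` has momentum distribution
`|ψ(p)|² = (N!)² (2β)^{2(N−1)} / (β² + p²)^{N+1}`. -/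
theorem hydrogen_max_ell_momentum_distribution
    (N : ℕ) (hN : 1 ≤ N) (β : ℝ) (hβ : 0 < β) (p : ℝ) :
    ‖∫ r in Set.Ioi (0 : ℝ),
        Complex.exp (Complex.I * p * r)
          * (((2 * β * r) ^ (N - 1) * Real.exp (-β * r) : ℝ) : ℂ) * (r : ℂ)‖ ^ 2
      = ((N ! : ℝ)) ^ 2 * (2 * β) ^ (2 * (N - 1)) / (β ^ 2 + p ^ 2) ^ (N + 1) := by
  set c : ℂ := (β : ℂ) - Complex.I * p with hcdef
  have hcre : 0 < c.re := by simp [hcdef, hβ]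
  have hNe : N - 1 + 1 = N := Nat.succ_pred_eq_of_pos hN
  have hrw : ∀ r : ℝ,
      Complex.exp (Complex.I * p * r)
          * (((2 * β * r) ^ (N - 1) * Real.exp (-β * r) : ℝ) : ℂ) * (r : ℂ)
        = ((2 * β : ℝ) : ℂ) ^ (N - 1) * ((r : ℂ) ^ N * Complex.exp (-(c * r))) := by
    intro r
    have hexp : Complex.exp (-(c * r))
        = Complex.exp (Complex.I * p * r) * Complex.exp (((-β * r : ℝ)) : ℂ) := by
      rw [← Complex.exp_add]
      congr 1
      push_cast [hcdef]
      ring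
    rw [show ((r : ℂ)) ^ N = (r : ℂ) ^ (N - 1) * r from by rw [← pow_succ, hNe], hexp]
    push_cast
    ring
  have hint : (∫ r in Set.Ioi (0 : ℝ),
      Complex.exp (Complex.I * p * r)
          * (((2 * β * r) ^ (N - 1) * Real.exp (-β * r) : ℝ) : ℂ) * (r : ℂ))
      = ((2 * β : ℝ) : ℂ) ^ (N - 1) * ((N ! : ℂ) / c ^ (N + 1)) := by
    simp only [hrw]
    rw [integral_const_mul, aux_integral c hcre N]
  rw [hint]
  have hc2 : ‖c‖ ^ 2 = β ^ 2 + p ^ 2 := by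
    rw [Complex.sq_norm, Complex.normSq_apply]
    simp [hcdef]
    ring
  have hD : (‖c‖ ^ (N + 1)) ^ 2 = (β ^ 2 + p ^ 2) ^ (N + 1) := by
    rw [← pow_mul, mul_comm, pow_mul, hc2]
  rw [norm_mul, norm_pow, norm_div, norm_pow, Complex.norm_real, Complex.norm_natCast,
    Real.norm_of_nonneg (by positivity : (0:ℝ) ≤ 2 * β)]
  rw [mul_pow, div_pow, hD, ← pow_mul, mul_comm (N-1) 2]
  ring
end
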